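/- Let Ω ⊂ ℝⁿ have finite positive Lebesgue measure |Ω|, let γ ∈ L¹(ℝⁿ) be even, and let F : Ω × ℝ → ℝ be a Carathéodory function satisfying |F(x,t)| ≤ a₁|t| + (a₂/(α+1))|t|^{α+1} for all x ∈ Ω, t ∈ ℝ, and such that for every ε ∈ (0,1) there exists K̃(ε) > 0 with F(x,t) ≥ t²/ε − K̃(ε)/ε for all x ∈ Ω and all t ≥ 0. Let u ∈ L²(ℝⁿ) vanish almost everywhere outside Ω, with u ≥ 0 almost everywhere, u|_Ω ∈ L^{α+1}(Ω), and ‖u‖_{L²(Ω)} > 0. Then I[tu]/t² → −∞ as t → +∞, where I[w] := (1/2) B[w,w] − ∫_Ω F(x, w(x)) dx. -/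

import Mathlib

open MeasureTheory Filter

/-- The nonlocal bilinear form
`B[u,v] = (1/2) ∬ (u(y)-u(x)) γ(x-y) (v(y)-v(x)) dy dx`. -/
noncomputable def nonlocalForm (n : ℕ) (γ u v : EuclideanSpace ℝ (Fin n) → ℝ) : ℝ :=
  (1/2) * ∫ x, ∫ y, (u y - u x) * γ (x - y) * (v y - v x)

/-- The energy `I[w] = (1/2) B[w,w] − ∫_Ω F(x,w(x)) dx`. -/
noncomputable def energyF (n : ℕ) (Ω : Set (EuclideanSpace ℝ (Fin n)))
    (γ : EuclideanSpace ℝ (Fin n) → ℝ) (F : EuclideanSpace ℝ (Fin n) → ℝ → ℝ)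
    (w : EuclideanSpace ℝ (Fin n) → ℝ) : ℝ :=
  (1/2) * nonlocalForm n γ w w - ∫ x in Ω, F x (w x)

/-- Under the superquadratic growth condition on `F`, for a nonnegative, nontrivial
`u ∈ L²(ℝⁿ) ∩ L^{α+1}(Ω)` vanishing a.e. outside `Ω` one has `I[tu]/t² → −∞` as
`t → +∞`. -/
theorem energy_ray_to_neg_infty
    (n : ℕ) (Ω : Set (EuclideanSpace ℝ (Fin n))) (hΩ : MeasurableSet Ω)
    (hΩfin : volume Ω < ⊤) (hΩpos : 0 < volume Ω)
    (γ : EuclideanSpace ℝ (Fin n) → ℝ)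
    (hγ : Integrable γ) (hγeven : ∀ z, γ (-z) = γ z)
    (F : EuclideanSpace ℝ (Fin n) → ℝ → ℝ)
    (hFmeas : ∀ t : ℝ, Measurable fun x => F x t)
    (hFcont : ∀ x, Continuous (F x))
    (a₁ a₂ α : ℝ) (ha₁ : 0 < a₁) (ha₂ : 0 < a₂) (hα : 1 < α)
    (hFbound : ∀ x ∈ Ω, ∀ t : ℝ,
      |F x t| ≤ a₁ * |t| + a₂ / (α + 1) * |t| ^ (α + 1))
    (hFgrow : ∀ ε ∈ Set.Ioo (0:ℝ) 1, ∃ K > (0:ℝ), ∀ x ∈ Ω, ∀ t : ℝ, 0 ≤ t →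
      t ^ 2 / ε - K / ε ≤ F x t)
    (u : EuclideanSpace ℝ (Fin n) → ℝ)
    (hu2 : MemLp u 2 (volume : Measure (EuclideanSpace ℝ (Fin n))))
    (hu0 : ∀ᵐ x, x ∉ Ω → u x = 0)
    (hunn : ∀ᵐ x, 0 ≤ u x)
    (huα : MemLp u (ENNReal.ofReal (α + 1)) (volume.restrict Ω))
    (hunz : 0 < ∫ x in Ω, (u x) ^ 2) :
    Tendsto (fun t : ℝ => energyF n Ω γ F (fun x => t * u x) / t ^ 2)
      atTop atBot := by
  classical
  -- finite measure on Ω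
  haveI : IsFiniteMeasure (volume.restrict Ω) :=
    ⟨by rwa [Measure.restrict_apply_univ]⟩
  -- measurable representative of u
  obtain ⟨u', hu'sm, huu'⟩ := hu2.aestronglyMeasurable
  have hu'meas : Measurable u' := hu'sm.measurable
  have huu'Ω : u =ᵐ[volume.restrict Ω] u' := ae_restrict_of_ae huu'
  -- Carathéodory measurability
  have hFm : ∀ t : ℝ, Measurable fun x => F x (t * u' x) := by
    intro t
    have h1 : Measurable (Function.uncurry fun s (x : EuclideanSpace ℝ (Fin n)) => F x s) :=
      measurable_uncurry_of_continuous_of_measurable (fun x => hFcont x) hFmeas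
    exact h1.comp ((hu'meas.const_mul t).prodMk measurable_id)
  -- scaling of the bilinear form
  have hscale : ∀ t : ℝ, nonlocalForm n γ (fun x => t * u x) (fun x => t * u x)
      = t ^ 2 * nonlocalForm n γ u u := by
    intro t
    simp only [nonlocalForm]
    have h : ∀ x y : EuclideanSpace ℝ (Fin n), (t * u y - t * u x) * γ (x - y) * (t * u y - t * u x)
        = t ^ 2 * ((u y - u x) * γ (x - y) * (u y - u x)) := by intro x y; ring
    simp_rw [h, integral_const_mul]
    ring
  set C : ℝ := nonlocalForm n γ u u with hCdef
  set S : ℝ := ∫ x in Ω, (u x) ^ 2 with hSdef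
  set V : ℝ := (volume Ω).toReal with hVdef
  have hV0 : 0 ≤ V := ENNReal.toReal_nonneg
  -- integrability of u on Ω in various powers
  have hu2Ω : MemLp u' 2 (volume.restrict Ω) :=
    (hu2.restrict Ω).ae_eq huu'Ω
  have hu1Ω : Integrable u' (volume.restrict Ω) :=
    hu2Ω.integrable (by norm_num)
  have husqΩ : Integrable (fun x => u' x ^ 2) (volume.restrict Ω) :=
    hu2Ω.integrable_sq
  have huabs : Integrable (fun x => |u' x|) (volume.restrict Ω) := hu1Ω.abs
  have hα1pos : (0:ℝ) < α + 1 := by linarith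
  have huαΩ : MemLp u' (ENNReal.ofReal (α + 1)) (volume.restrict Ω) :=
    huα.ae_eq huu'Ω
  have hurpow : Integrable (fun x => |u' x| ^ (α + 1)) (volume.restrict Ω) := by
    have := huαΩ.integrable_norm_rpow (ne_of_gt (ENNReal.ofReal_pos.2 hα1pos)) (by simp)
    simpa [ENNReal.toReal_ofReal hα1pos.le, Real.norm_eq_abs] using this
  have hS' : (∫ x in Ω, u' x ^ 2) = S := by
    rw [hSdef]
    exact (integral_congr_ae (huu'Ω.mono fun x hx => by simp only [hx])).symm
  -- integrability of F(x, t u'(x)) on Ω for each t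
  have hFint : ∀ t : ℝ, Integrable (fun x => F x (t * u' x)) (volume.restrict Ω) := by
    intro t
    have hg : Integrable
        (fun x => a₁ * (|t| * |u' x|) + a₂ / (α + 1) * (|t| ^ (α + 1) * |u' x| ^ (α + 1)))
        (volume.restrict Ω) := by
      exact ((huabs.const_mul |t|).const_mul a₁).add
        (((hurpow.const_mul (|t| ^ (α + 1))).const_mul (a₂ / (α + 1))))
    refine hg.mono' ((hFm t).aestronglyMeasurable) ?_
    refine (ae_restrict_iff' hΩ).2 (ae_of_all _ fun x hx => ?_)
    have hb := hFbound x hx (t * u' x)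
    have h1 : |t * u' x| = |t| * |u' x| := abs_mul t (u' x)
    have h2 : |t * u' x| ^ (α + 1) = |t| ^ (α + 1) * |u' x| ^ (α + 1) := by
      rw [h1, Real.mul_rpow (abs_nonneg t) (abs_nonneg (u' x))]
    rw [Real.norm_eq_abs]
    calc |F x (t * u' x)| ≤ a₁ * |t * u' x| + a₂ / (α + 1) * |t * u' x| ^ (α + 1) := hb
      _ = _ := by rw [h2, h1]
  -- rewrite the energy integral via u'
  have hIeq : ∀ t : ℝ, (∫ x in Ω, F x (t * u x)) = ∫ x in Ω, F x (t * u' x) := by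
    intro t
    exact integral_congr_ae (huu'Ω.mono fun x hx => by simp only [hx])
  -- main: tendsto
  rw [tendsto_atBot]
  intro M
  -- choose ε
  set D : ℝ := (1/2) * C + 1 - M with hDdef
  set ε : ℝ := min (1/2) (S / max D 1) with hεdef
  have hmax1 : (0:ℝ) < max D 1 := lt_of_lt_of_le one_pos (le_max_right _ _)
  have hε0 : 0 < ε := lt_min (by norm_num) (div_pos hunz hmax1)
  have hε1 : ε < 1 := lt_of_le_of_lt (min_le_left _ _) (by norm_num)
  have hεS : D ≤ S / ε := by
    have h1 : ε ≤ S / max D 1 := min_le_right _ _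
    have h2 : max D 1 ≤ S / ε := by
      rw [le_div_iff₀ hε0]
      calc max D 1 * ε ≤ max D 1 * (S / max D 1) := by
            exact mul_le_mul_of_nonneg_left h1 hmax1.le
        _ = S := by field_simp
    exact le_trans (le_max_left _ _) h2
  obtain ⟨K, hK0, hK⟩ := hFgrow ε ⟨hε0, hε1⟩
  -- choose t₀
  refine eventually_atTop.2 ⟨max 1 (Real.sqrt (K * V / ε)), fun t ht => ?_⟩
  have ht1 : (1:ℝ) ≤ t := le_trans (le_max_left _ _) ht
  have ht0 : (0:ℝ) < t := lt_of_lt_of_le one_pos ht1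
  have ht2 : K * V / ε ≤ t ^ 2 := by
    have hs : Real.sqrt (K * V / ε) ≤ t := le_trans (le_max_right _ _) ht
    have hnn : 0 ≤ K * V / ε := div_nonneg (mul_nonneg hK0.le hV0) hε0.le
    calc K * V / ε = Real.sqrt (K * V / ε) ^ 2 := (Real.sq_sqrt hnn).symm
      _ ≤ t ^ 2 := by nlinarith [Real.sqrt_nonneg (K * V / ε)]
  -- lower bound on the integral of F
  have hlow : (t ^ 2 / ε) * S - (K / ε) * V ≤ ∫ x in Ω, F x (t * u' x) := by
    have hint_lb : Integrable (fun x => (t * u' x) ^ 2 / ε - K / ε)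
        (volume.restrict Ω) := by
      have h1 : (fun x => (t * u' x) ^ 2 / ε - K / ε)
          = fun x => (t ^ 2 / ε) * (u' x ^ 2) - K / ε := by
        funext x; field_simp
      rw [h1]
      exact (husqΩ.const_mul _).sub (integrable_const _)
    have hmono : (fun x => (t * u' x) ^ 2 / ε - K / ε)
        ≤ᵐ[volume.restrict Ω] fun x => F x (t * u' x) := by
      have hnn' : ∀ᵐ x ∂(volume.restrict Ω), 0 ≤ u' x :=
        ae_restrict_of_ae (hunn.mp (huu'.mono fun x hx h => hx ▸ h))
      have hmem : ∀ᵐ x ∂(volume.restrict Ω), x ∈ Ω :=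
        ae_restrict_mem hΩ
      filter_upwards [hnn', hmem] with x hx hxΩ
      exact hK x hxΩ (t * u' x) (mul_nonneg ht0.le hx)
    have := integral_mono_ae hint_lb (hFint t) hmono
    refine le_trans (le_of_eq ?_) this
    have h1 : (fun x => (t * u' x) ^ 2 / ε - K / ε)
        = fun x => (t ^ 2 / ε) * (u' x ^ 2) - K / ε := by
      funext x; field_simp
    rw [h1, integral_sub (husqΩ.const_mul _) (integrable_const _),
      integral_const_mul, hS', setIntegral_const]
    simp [hVdef, smul_eq_mul, mul_comm, Measure.real]
  -- final estimate
  have henergy : energyF n Ω γ F (fun x => t * u x)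
      = (1/2) * (t ^ 2 * C) - ∫ x in Ω, F x (t * u' x) := by
    rw [energyF, hscale t, hIeq t]
  rw [henergy, div_le_iff₀ (by positivity : (0:ℝ) < t ^ 2)]
  have hεS' : (1/2) * C + 1 - S / ε ≤ M := by
    have : D ≤ S / ε := hεS
    rw [hDdef] at this; linarith
  have hKV : K * V / ε ≤ t ^ 2 := ht2
  have hSε : 0 < S / ε := div_pos hunz hε0
  have h3 : t ^ 2 * (1 / 2 * C + 1 - S / ε) ≤ t ^ 2 * M :=
    mul_le_mul_of_nonneg_left hεS' (sq_nonneg t)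
  have h4 : t ^ 2 * (1 / 2 * C + 1 - S / ε) = 1 / 2 * (t ^ 2 * C) + t ^ 2 - t ^ 2 / ε * S := by
    ring
  have h5 : K / ε * V = K * V / ε := by ring
  linarith [hlow, hKV, h3, h4, h5]
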